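/- Assume v_1 ≥ v_2 ≥ … ≥ v_n and ∑_{i=1}^n v_i ≥ 1. Let k be the minimal integer with ∑_{i=1}^k v_i ≥ 1 and set U = {1,…,k}. Let M̂ be the maximum component of a multinomial random vector with T trials and probability vector (p_1,…,p_k) where p_i = v_i/v(U). Then the expected maximum load of statically offering the assortment U satisfies E(M(U)) ≥ E(M̂)/2. -/

import Mathlib

open Finset

/-- MNL choice probability of product `i` when assortment `S` is offered. -/
noncomputable def phi {n : ℕ} (v : Fin n → ℝ) (S : Finset (Fin n)) (i : Fin n) : ℝ :=
  v i / (1 + ∑ j ∈ S, v j)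

/-- MNL no-purchase probability when assortment `S` is offered. -/
noncomputable def phi0 {n : ℕ} (v : Fin n → ℝ) (S : Finset (Fin n)) : ℝ :=
  1 / (1 + ∑ j ∈ S, v j)

/-- Probability of a single customer's choice when assortment `S` is offered:
`some i` (select product `i ∈ S`) has probability `φ_i(S)`, products outside `S`
are never selected, and `none` (no purchase) has probability `φ_0(S)`. -/
noncomputable def chooseProb {n : ℕ} (v : Fin n → ℝ) (S : Finset (Fin n)) :
    Option (Fin n) → ℝ
  | none => phi0 v S
  | some i => if i ∈ S then phi v S i else 0

/-- `staticEM T v S` is the expected maximum load `E(M(S))` when assortment `S` is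
statically offered to `T` customers making independent MNL choices:
`M(S) = max_{i ∈ S} L_i(S)` where `L_i(S)` counts the customers selecting `i`. -/
noncomputable def staticEM {n : ℕ} (T : ℕ) (v : Fin n → ℝ) (S : Finset (Fin n)) : ℝ :=
  ∑ f : Fin T → Option (Fin n),
    (∏ t, chooseProb v S (f t)) *
      ((S.sup fun i => (Finset.univ.filter fun t => f t = some i).card : ℕ) : ℝ)

/-- `E(max_{1 ≤ i ≤ k} L_i)` where `(L_1, …, L_k)` is a multinomial random vector with `T`
trials and probability vector `p`. -/
noncomputable def multiExpMax (T k : ℕ) (p : Fin k → ℝ) : ℝ :=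
  ∑ f : Fin T → Fin k,
    (∏ t, p (f t)) *
      ((Finset.univ.sup fun i => (Finset.univ.filter fun t => f t = i).card : ℕ) : ℝ)

namespace MNLaux

/-! ### The three-state activity distribution -/

noncomputable def rho (V : ℝ) : Fin 3 → ℝ := ![1/(1+V), (V-1)/(1+V), 1/(1+V)]

lemma rho_zero (V : ℝ) : rho V 0 = 1/(1+V) := rfl
lemma rho_one (V : ℝ) : rho V 1 = (V-1)/(1+V) := rfl
lemma rho_two (V : ℝ) : rho V 2 = 1/(1+V) := rfl

lemma rho_sum (V : ℝ) (h1V : (1:ℝ)+V ≠ 0) : ∑ y : Fin 3, rho V y = 1 := by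
  rw [Fin.sum_univ_three, rho_zero, rho_one, rho_two]
  field_simp
  ring

lemma rho_nonneg {V : ℝ} (hV1 : 1 ≤ V) (y : Fin 3) : 0 ≤ rho V y := by
  have h1V : (0:ℝ) < 1 + V := by linarith
  fin_cases y
  · show (0:ℝ) ≤ rho V 0; rw [rho_zero]; positivity
  · show (0:ℝ) ≤ rho V 1; rw [rho_one]; exact div_nonneg (by linarith) h1V.le
  · show (0:ℝ) ≤ rho V 2; rw [rho_two]; positivity

/-! ### Counts and maximum loads on the master space -/

def emb {n k : ℕ} (hkn : k ≤ n) (j : Fin k) : Fin n := ⟨(j : ℕ), lt_of_lt_of_le j.isLt hkn⟩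

lemma emb_inj {n k : ℕ} (hkn : k ≤ n) : Function.Injective (emb hkn) := by
  intro a b hab
  have hval := congrArg Fin.val hab
  exact Fin.ext hval

def phiMap {n k : ℕ} (hkn : k ≤ n) (z : Fin k × Fin 3) : Option (Fin n) :=
  if z.2 = 0 then none else some (emb hkn z.1)

lemma U_eq_image {n k : ℕ} (hkn : k ≤ n) :
    (Finset.univ.filter fun i : Fin n => (i : ℕ) < k) = Finset.image (emb hkn) Finset.univ := by
  ext i
  simp only [Finset.mem_filter, Finset.mem_univ, true_and, Finset.mem_image]
  constructor
  · intro hik; exact ⟨⟨(i : ℕ), hik⟩, Fin.ext rfl⟩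
  · rintro ⟨j, _, rfl⟩; exact j.isLt

lemma sum_emb {n k : ℕ} (hkn : k ≤ n) (v : Fin n → ℝ) :
    ∑ i : Fin k, v (emb hkn i) = ∑ j ∈ Finset.univ.filter (fun i : Fin n => (i : ℕ) < k), v j := by
  rw [U_eq_image hkn, Finset.sum_image]
  intro a _ b _ hab
  exact emb_inj hkn hab

def cnt {k T : ℕ} (P : Fin 3 → Prop) [DecidablePred P] (h : Fin T → Fin k × Fin 3) (j : Fin k) : ℕ :=
  (Finset.univ.filter fun t => P (h t).2 ∧ (h t).1 = j).card

def Msup {k T : ℕ} (P : Fin 3 → Prop) [DecidablePred P] (h : Fin T → Fin k × Fin 3) : ℕ :=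
  Finset.univ.sup (cnt P h)

lemma cnt_eq {k T : ℕ} (P : Fin 3 → Prop) [DecidablePred P] (h : Fin T → Fin k × Fin 3) (j : Fin k) :
    cnt P h j = ((Finset.univ.filter fun t => (h t).1 = j).filter fun t => P (h t).2).card := by
  unfold cnt
  rw [Finset.filter_filter]
  congr 1
  exact Finset.filter_congr fun x _ => and_comm

lemma cnt_split {k T : ℕ} (h : Fin T → Fin k × Fin 3) (j : Fin k) :
    cnt (fun _ => True) h j
      = cnt (fun y => y ≠ 0) h j + cnt (fun y => y = 0) h j := by
  rw [cnt_eq, cnt_eq, cnt_eq]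
  have := Finset.card_filter_add_card_filter_not
    (s := Finset.univ.filter fun t => (h t).1 = j) (p := fun t => (h t).2 ≠ 0)
  simp only [ne_eq, not_not, Finset.filter_true] at this ⊢
  omega

lemma cnt_mono {k T : ℕ} {P Q : Fin 3 → Prop} [DecidablePred P] [DecidablePred Q]
    (hPQ : ∀ y, P y → Q y) (h : Fin T → Fin k × Fin 3) (j : Fin k) :
    cnt P h j ≤ cnt Q h j := by
  unfold cnt
  refine Finset.card_le_card fun t ht => ?_
  simp only [Finset.mem_filter] at ht ⊢
  exact ⟨ht.1, hPQ _ ht.2.1, ht.2.2⟩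

lemma Msup_all_le {k T : ℕ} (h : Fin T → Fin k × Fin 3) :
    Msup (fun _ => True) h ≤ Msup (fun y => y ≠ 0) h + Msup (fun y => y = 0) h := by
  refine Finset.sup_le fun j _ => ?_
  rw [cnt_split]
  exact add_le_add (Finset.le_sup (mem_univ j)) (Finset.le_sup (mem_univ j))

lemma Msup_lo_le {k T : ℕ} (h : Fin T → Fin k × Fin 3) :
    Msup (fun y : Fin 3 => y = 2) h ≤ Msup (fun y => y ≠ 0) h := by
  refine Finset.sup_le fun j _ => ?_
  refine le_trans (cnt_mono (fun y hy => ?_) h j) (Finset.le_sup (mem_univ j))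
  subst hy; decide

/-! ### The swap involution -/

def sw : Fin 3 → Fin 3 := ![2, 1, 0]

lemma sw_sw : ∀ y, sw (sw y) = y := by decide

lemma rho_sw (V : ℝ) (y : Fin 3) : rho V (sw y) = rho V y := by
  fin_cases y <;> rfl

def swh {k T : ℕ} (h : Fin T → Fin k × Fin 3) : Fin T → Fin k × Fin 3 :=
  fun t => ((h t).1, sw (h t).2)

lemma swh_invol {k T : ℕ} : Function.Involutive (swh (k := k) (T := T)) := by
  intro h; funext t; simp [swh, sw_sw]

lemma cnt_sw {k T : ℕ} (h : Fin T → Fin k × Fin 3) (j : Fin k) :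
    cnt (fun y : Fin 3 => y = 2) (swh h) j = cnt (fun y : Fin 3 => y = 0) h j := by
  have hy : ∀ y : Fin 3, sw y = 2 ↔ y = 0 := by decide
  unfold cnt swh
  congr 1
  exact Finset.filter_congr fun t _ => by simp [hy]

lemma Msup_sw {k T : ℕ} (h : Fin T → Fin k × Fin 3) :
    Msup (fun y : Fin 3 => y = 2) (swh h) = Msup (fun y : Fin 3 => y = 0) h := by
  unfold Msup
  congr 1
  funext j
  exact cnt_sw h j

/-! ### Pointwise weight identity -/

lemma point_weight {n k : ℕ} (hkn : k ≤ n) (v : Fin n → ℝ) {V : ℝ}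
    (hVpos : 0 < V)
    (hUsum : ∑ j ∈ Finset.univ.filter (fun i : Fin n => (i : ℕ) < k), v j = V)
    (o : Option (Fin n)) :
    ∑ z : Fin k × Fin 3, (v (emb hkn z.1) / V * rho V z.2) * (if o = phiMap hkn z then 1 else 0)
      = chooseProb v (Finset.univ.filter fun i : Fin n => (i : ℕ) < k) o := by
  classical
  have h10 : (1 : Fin 3) ≠ 0 := by decide
  have h20 : (2 : Fin 3) ≠ 0 := by decide
  have hsum : ∑ i : Fin k, v (emb hkn i) = V := by rw [sum_emb hkn v, hUsum]
  rw [Fintype.sum_prod_type]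
  cases o with
  | none =>
    calc (∑ x : Fin k, ∑ y : Fin 3,
            (v (emb hkn x) / V * rho V y) * (if (none : Option (Fin n)) = phiMap hkn (x, y) then 1 else 0))
        = ∑ x : Fin k, v (emb hkn x) / V * rho V 0 := by
          refine Finset.sum_congr rfl fun x _ => ?_
          rw [Fin.sum_univ_three]
          simp [phiMap, h10, h20]
      _ = (∑ x : Fin k, v (emb hkn x)) / V * rho V 0 := by
          rw [Finset.sum_div, Finset.sum_mul]
      _ = chooseProb v (Finset.univ.filter fun i : Fin n => (i : ℕ) < k) none := by
          rw [hsum, div_self hVpos.ne', one_mul, rho_zero]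
          simp [chooseProb, phi0, hUsum]
  | some i =>
    have hstep : (∑ x : Fin k, ∑ y : Fin 3,
            (v (emb hkn x) / V * rho V y) * (if (some i : Option (Fin n)) = phiMap hkn (x, y) then 1 else 0))
        = ∑ x : Fin k, (v (emb hkn x) / V * (rho V 1 + rho V 2)) * (if i = emb hkn x then 1 else 0) := by
      refine Finset.sum_congr rfl fun x _ => ?_
      rw [Fin.sum_univ_three]
      by_cases hcase : i = emb hkn x
      · simp [phiMap, h10, h20, hcase]
        ring
      · simp [phiMap, h10, h20, hcase]
    rw [hstep]
    by_cases hik : (i : ℕ) < k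
    · have hiU : i ∈ Finset.univ.filter (fun i : Fin n => (i : ℕ) < k) := by
        simp [hik]
      have hembeq : emb hkn ⟨(i : ℕ), hik⟩ = i := Fin.ext rfl
      have hiff : ∀ x : Fin k, (i = emb hkn x) ↔ x = ⟨(i : ℕ), hik⟩ := by
        intro x
        constructor
        · intro hx
          exact (emb_inj hkn (hembeq.trans hx)).symm
        · rintro rfl
          exact hembeq.symm
      calc (∑ x : Fin k, (v (emb hkn x) / V * (rho V 1 + rho V 2)) * (if i = emb hkn x then 1 else 0))
          = ∑ x : Fin k, (if x = ⟨(i : ℕ), hik⟩ then v (emb hkn x) / V * (rho V 1 + rho V 2) else 0) := by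
            refine Finset.sum_congr rfl fun x _ => ?_
            by_cases hx : x = ⟨(i : ℕ), hik⟩
            · rw [if_pos ((hiff x).mpr hx), if_pos hx, mul_one]
            · rw [if_neg (fun hcon => hx ((hiff x).mp hcon)), if_neg hx, mul_zero]
        _ = v (emb hkn ⟨(i : ℕ), hik⟩) / V * (rho V 1 + rho V 2) := by
            rw [Finset.sum_ite_eq' Finset.univ (⟨(i : ℕ), hik⟩ : Fin k)
              (fun x => v (emb hkn x) / V * (rho V 1 + rho V 2)), if_pos (Finset.mem_univ _)]
        _ = v i / (1 + V) := by
            rw [hembeq, rho_one, rho_two]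
            field_simp
            ring
        _ = chooseProb v (Finset.univ.filter fun i : Fin n => (i : ℕ) < k) (some i) := by
            simp [chooseProb, phi, hiU, hUsum]
    · calc (∑ x : Fin k, (v (emb hkn x) / V * (rho V 1 + rho V 2)) * (if i = emb hkn x then 1 else 0))
          = 0 := by
            refine Finset.sum_eq_zero fun x _ => ?_
            rw [if_neg fun hcon => hik (by rw [hcon]; exact x.isLt), mul_zero]
        _ = chooseProb v (Finset.univ.filter fun i : Fin n => (i : ℕ) < k) (some i) := by
            simp [chooseProb, hik]

/-! ### Identity (a): the static expected maximum on the master space -/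

lemma staticEM_eq {n k : ℕ} (T : ℕ) (hkn : k ≤ n) (v : Fin n → ℝ) {V : ℝ}
    (hVpos : 0 < V)
    (hUsum : ∑ j ∈ Finset.univ.filter (fun i : Fin n => (i : ℕ) < k), v j = V) :
    staticEM T v (Finset.univ.filter fun i : Fin n => (i : ℕ) < k)
      = ∑ h : Fin T → Fin k × Fin 3,
          (∏ t, v (emb hkn (h t).1) / V * rho V (h t).2) * ((Msup (fun y => y ≠ 0) h : ℕ) : ℝ) := by
  classical
  unfold staticEM
  calc
    (∑ f : Fin T → Option (Fin n),
        (∏ t, chooseProb v (Finset.univ.filter fun i : Fin n => (i : ℕ) < k) (f t)) *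
          (((Finset.univ.filter fun i : Fin n => (i : ℕ) < k).sup fun i =>
              (Finset.univ.filter fun t => f t = some i).card : ℕ) : ℝ))
      = ∑ f : Fin T → Option (Fin n), ∑ h : Fin T → Fin k × Fin 3,
          (∏ t, (v (emb hkn (h t).1) / V * rho V (h t).2) * (if f t = phiMap hkn (h t) then 1 else 0)) *
            (((Finset.univ.filter fun i : Fin n => (i : ℕ) < k).sup fun i =>
              (Finset.univ.filter fun t => f t = some i).card : ℕ) : ℝ) := by
        refine Finset.sum_congr rfl fun f _ => ?_
        rw [← Finset.sum_mul]
        congr 1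
        calc (∏ t, chooseProb v (Finset.univ.filter fun i : Fin n => (i : ℕ) < k) (f t))
            = ∏ t, ∑ z : Fin k × Fin 3,
                (v (emb hkn z.1) / V * rho V z.2) * (if f t = phiMap hkn z then 1 else 0) :=
              Finset.prod_congr rfl fun t _ => (point_weight hkn v hVpos hUsum (f t)).symm
          _ = ∑ h ∈ Fintype.piFinset (fun _ : Fin T => (Finset.univ : Finset (Fin k × Fin 3))),
                ∏ t, (v (emb hkn ((h t)).1) / V * rho V (h t).2) * (if f t = phiMap hkn (h t) then 1 else 0) :=
              Finset.prod_univ_sum _ _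
          _ = ∑ h : Fin T → Fin k × Fin 3,
                ∏ t, (v (emb hkn ((h t)).1) / V * rho V (h t).2) * (if f t = phiMap hkn (h t) then 1 else 0) := by
              rw [Fintype.piFinset_univ]
    _ = ∑ h : Fin T → Fin k × Fin 3, ∑ f : Fin T → Option (Fin n),
          (∏ t, (v (emb hkn (h t).1) / V * rho V (h t).2) * (if f t = phiMap hkn (h t) then 1 else 0)) *
            (((Finset.univ.filter fun i : Fin n => (i : ℕ) < k).sup fun i =>
              (Finset.univ.filter fun t => f t = some i).card : ℕ) : ℝ) := Finset.sum_comm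
    _ = ∑ h : Fin T → Fin k × Fin 3,
          (∏ t, v (emb hkn (h t).1) / V * rho V (h t).2) * ((Msup (fun y => y ≠ 0) h : ℕ) : ℝ) := by
        refine Finset.sum_congr rfl fun h _ => ?_
        have hfac : ∀ f : Fin T → Option (Fin n),
            (∏ t, (v (emb hkn (h t).1) / V * rho V (h t).2) * (if f t = phiMap hkn (h t) then 1 else 0))
              = (∏ t, v (emb hkn (h t).1) / V * rho V (h t).2) *
                  (if f = (fun t => phiMap hkn (h t)) then 1 else 0) := by
          intro f
          rw [Finset.prod_mul_distrib, Finset.prod_boole]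
          by_cases hf : f = fun t => phiMap hkn (h t)
          · rw [if_pos hf, if_pos fun t _ => congrFun hf t]
          · rw [if_neg hf, if_neg fun hall => hf (funext fun t => hall t (Finset.mem_univ t))]
        have hM : ((Finset.univ.filter fun i : Fin n => (i : ℕ) < k).sup fun i =>
              (Finset.univ.filter fun t => phiMap hkn (h t) = some i).card) = Msup (fun y => y ≠ 0) h := by
          rw [U_eq_image hkn, Finset.sup_image]
          unfold Msup
          refine Finset.sup_congr rfl fun j _ => ?_
          unfold cnt
          simp only [Function.comp]
          congr 1
          refine Finset.filter_congr fun t _ => ?_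
          unfold phiMap
          by_cases h0 : (h t).2 = 0
          · simp [h0]
          · simp [h0, (emb_inj hkn).eq_iff]
        calc (∑ f : Fin T → Option (Fin n),
              (∏ t, (v (emb hkn (h t).1) / V * rho V (h t).2) * (if f t = phiMap hkn (h t) then 1 else 0)) *
                (((Finset.univ.filter fun i : Fin n => (i : ℕ) < k).sup fun i =>
                  (Finset.univ.filter fun t => f t = some i).card : ℕ) : ℝ))
            = ∑ f : Fin T → Option (Fin n),
                (if f = (fun t => phiMap hkn (h t)) then
                  (∏ t, v (emb hkn (h t).1) / V * rho V (h t).2) *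
                    (((Finset.univ.filter fun i : Fin n => (i : ℕ) < k).sup fun i =>
                      (Finset.univ.filter fun t => f t = some i).card : ℕ) : ℝ)
                 else 0) := by
              refine Finset.sum_congr rfl fun f _ => ?_
              rw [hfac f]
              by_cases hf : f = fun t => phiMap hkn (h t)
              · rw [if_pos hf, if_pos hf, mul_one]
              · rw [if_neg hf, if_neg hf, mul_zero, zero_mul]
          _ = (∏ t, v (emb hkn (h t).1) / V * rho V (h t).2) *
                (((Finset.univ.filter fun i : Fin n => (i : ℕ) < k).sup fun i =>
                  (Finset.univ.filter fun t => phiMap hkn (h t) = some i).card : ℕ) : ℝ) := by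
              rw [Finset.sum_ite_eq' Finset.univ (fun t => phiMap hkn (h t)), if_pos (Finset.mem_univ _)]
          _ = (∏ t, v (emb hkn (h t).1) / V * rho V (h t).2) * ((Msup (fun y => y ≠ 0) h : ℕ) : ℝ) := by
              rw [hM]

/-! ### Identity (b): the multinomial expected maximum on the master space -/

lemma multiExpMax_eq {k : ℕ} (T : ℕ) (p : Fin k → ℝ) (V : ℝ) (hrsum : ∑ y : Fin 3, rho V y = 1) :
    (∑ h : Fin T → Fin k × Fin 3,
        (∏ t, p (h t).1 * rho V (h t).2) * ((Msup (fun _ => True) h : ℕ) : ℝ))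
      = multiExpMax T k p := by
  classical
  rw [← Equiv.sum_comp (Equiv.arrowProdEquivProdArrow (Fin T) (fun _ => Fin k) (fun _ => Fin 3)).symm
      (fun h => (∏ t, p (h t).1 * rho V (h t).2) * ((Msup (fun _ => True) h : ℕ) : ℝ))]
  rw [Fintype.sum_prod_type]
  unfold multiExpMax
  refine Finset.sum_congr rfl fun g _ => ?_
  have hsum_u : ∑ u : Fin T → Fin 3, ∏ t, rho V (u t) = 1 := by
    rw [← Fintype.piFinset_univ, ← Finset.prod_univ_sum]
    simp [hrsum]
  have hMg : ∀ u : Fin T → Fin 3,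
      Msup (fun _ => True) ((Equiv.arrowProdEquivProdArrow (Fin T) (fun _ => Fin k) (fun _ => Fin 3)).symm (g, u))
        = Finset.univ.sup fun i => (Finset.univ.filter fun t => g t = i).card := by
    intro u
    unfold Msup
    refine Finset.sup_congr rfl fun j _ => ?_
    unfold cnt
    congr 1
    refine Finset.filter_congr fun t _ => ?_
    simp [Equiv.arrowProdEquivProdArrow]
  calc (∑ u : Fin T → Fin 3,
          (∏ t, p (g t) * rho V (u t)) *
            ((Msup (fun _ => True) ((Equiv.arrowProdEquivProdArrow (Fin T) (fun _ => Fin k) (fun _ => Fin 3)).symm (g, u)) : ℕ) : ℝ))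
      = ∑ u : Fin T → Fin 3,
          ((∏ t, p (g t)) * ((Finset.univ.sup fun i => (Finset.univ.filter fun t => g t = i).card : ℕ) : ℝ)) *
            (∏ t, rho V (u t)) := by
        refine Finset.sum_congr rfl fun u _ => ?_
        rw [Finset.prod_mul_distrib, hMg u]
        ring
    _ = ((∏ t, p (g t)) * ((Finset.univ.sup fun i => (Finset.univ.filter fun t => g t = i).card : ℕ) : ℝ)) *
          ∑ u : Fin T → Fin 3, ∏ t, rho V (u t) := by
        rw [← Finset.mul_sum]
    _ = (∏ t, p (g t)) * ((Finset.univ.sup fun i => (Finset.univ.filter fun t => g t = i).card : ℕ) : ℝ) := by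
        rw [hsum_u, mul_one]

/-! ### Identity (c): swapping inactive and low-active states -/

lemma sum_swap_nothi {k T : ℕ} (p : Fin k → ℝ) (V : ℝ) :
    (∑ h : Fin T → Fin k × Fin 3,
        (∏ t, p (h t).1 * rho V (h t).2) * ((Msup (fun y : Fin 3 => y = 0) h : ℕ) : ℝ))
      = ∑ h : Fin T → Fin k × Fin 3,
          (∏ t, p (h t).1 * rho V (h t).2) * ((Msup (fun y : Fin 3 => y = 2) h : ℕ) : ℝ) := by
  classical
  rw [← (Function.Involutive.bijective (swh_invol (k := k) (T := T))).sum_comp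
      (fun h => (∏ t, p (h t).1 * rho V (h t).2) * ((Msup (fun y : Fin 3 => y = 2) h : ℕ) : ℝ))]
  refine Finset.sum_congr rfl fun h _ => ?_
  rw [Msup_sw]
  congr 1
  refine Finset.prod_congr rfl fun t _ => ?_
  calc p ((h t).1) * rho V ((h t).2) = p ((h t).1) * rho V (sw ((h t).2)) := by rw [rho_sw]
    _ = p ((swh h t).1) * rho V ((swh h t).2) := rfl

end MNLaux

open MNLaux in
/-- Let `k` be minimal with `v_1 + ⋯ + v_k ≥ 1` (products sorted by weakly decreasing
weight, total weight at least 1) and `U = {1,…,k}`. Then the expected maximum load of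
statically offering `U` is at least half of the expected maximum component `E(M̂)` of a
multinomial vector with `T` trials and probabilities `p_i = v_i / v(U)`. -/
theorem static_prefix_at_least_half_multinomial
    (n T k : ℕ) (v : Fin n → ℝ) (hv : ∀ i, 0 < v i)
    (hsorted : ∀ i j : Fin n, i ≤ j → v j ≤ v i)
    (htotal : 1 ≤ ∑ i, v i)
    (hk1 : 1 ≤ k) (hkn : k ≤ n)
    (hk : 1 ≤ ∑ i ∈ Finset.univ.filter (fun i : Fin n => (i : ℕ) < k), v i)
    (hmin : ∀ k' : ℕ, k' < k →
      ∑ i ∈ Finset.univ.filter (fun i : Fin n => (i : ℕ) < k'), v i < 1) :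
    staticEM T v (Finset.univ.filter fun i : Fin n => (i : ℕ) < k) ≥
      (multiExpMax T k (fun i : Fin k =>
        v ⟨(i : ℕ), lt_of_lt_of_le i.isLt hkn⟩ /
          ∑ j ∈ Finset.univ.filter (fun j : Fin n => (j : ℕ) < k), v j)) / 2 := by
  classical
  set V : ℝ := ∑ j ∈ Finset.univ.filter (fun j : Fin n => (j : ℕ) < k), v j with hVdef
  have hV1 : (1 : ℝ) ≤ V := hk
  have hVpos : (0 : ℝ) < V := lt_of_lt_of_le one_pos hV1
  have h1V : (0 : ℝ) < 1 + V := by linarith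
  have hUsum : ∑ j ∈ Finset.univ.filter (fun i : Fin n => (i : ℕ) < k), v j = V := hVdef.symm
  show staticEM T v (Finset.univ.filter fun i : Fin n => (i : ℕ) < k) ≥
      (multiExpMax T k (fun i : Fin k => v (emb hkn i) / V)) / 2
  have ha := staticEM_eq T hkn v hVpos hUsum
  have hb : (∑ h : Fin T → Fin k × Fin 3,
        (∏ t, v (emb hkn (h t).1) / V * rho V (h t).2) * ((Msup (fun _ => True) h : ℕ) : ℝ))
      = multiExpMax T k (fun i : Fin k => v (emb hkn i) / V) :=
    multiExpMax_eq T (fun i : Fin k => v (emb hkn i) / V) V (rho_sum V h1V.ne')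
  have hc : (∑ h : Fin T → Fin k × Fin 3,
        (∏ t, v (emb hkn (h t).1) / V * rho V (h t).2) * ((Msup (fun y : Fin 3 => y = 0) h : ℕ) : ℝ))
      = ∑ h : Fin T → Fin k × Fin 3,
          (∏ t, v (emb hkn (h t).1) / V * rho V (h t).2) * ((Msup (fun y : Fin 3 => y = 2) h : ℕ) : ℝ) :=
    sum_swap_nothi (fun i : Fin k => v (emb hkn i) / V) V
  have hwnn : ∀ h : Fin T → Fin k × Fin 3,
      0 ≤ ∏ t, v (emb hkn (h t).1) / V * rho V (h t).2 := by
    intro h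
    exact Finset.prod_nonneg fun t _ =>
      mul_nonneg (div_nonneg (hv _).le hVpos.le) (rho_nonneg hV1 _)
  have hstep : multiExpMax T k (fun i : Fin k => v (emb hkn i) / V)
      ≤ 2 * staticEM T v (Finset.univ.filter fun i : Fin n => (i : ℕ) < k) := by
    rw [← hb, ha]
    calc (∑ h : Fin T → Fin k × Fin 3,
            (∏ t, v (emb hkn (h t).1) / V * rho V (h t).2) * ((Msup (fun _ => True) h : ℕ) : ℝ))
        ≤ ∑ h : Fin T → Fin k × Fin 3,
            (∏ t, v (emb hkn (h t).1) / V * rho V (h t).2) *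
              (((Msup (fun y => y ≠ 0) h : ℕ) : ℝ) + ((Msup (fun y : Fin 3 => y = 0) h : ℕ) : ℝ)) := by
          refine Finset.sum_le_sum fun h _ => ?_
          refine mul_le_mul_of_nonneg_left ?_ (hwnn h)
          exact_mod_cast Msup_all_le h
      _ = (∑ h : Fin T → Fin k × Fin 3,
            (∏ t, v (emb hkn (h t).1) / V * rho V (h t).2) * ((Msup (fun y => y ≠ 0) h : ℕ) : ℝ))
          + ∑ h : Fin T → Fin k × Fin 3,
            (∏ t, v (emb hkn (h t).1) / V * rho V (h t).2) * ((Msup (fun y : Fin 3 => y = 0) h : ℕ) : ℝ) := by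
          rw [← Finset.sum_add_distrib]
          exact Finset.sum_congr rfl fun h _ => mul_add _ _ _
      _ = (∑ h : Fin T → Fin k × Fin 3,
            (∏ t, v (emb hkn (h t).1) / V * rho V (h t).2) * ((Msup (fun y => y ≠ 0) h : ℕ) : ℝ))
          + ∑ h : Fin T → Fin k × Fin 3,
            (∏ t, v (emb hkn (h t).1) / V * rho V (h t).2) * ((Msup (fun y : Fin 3 => y = 2) h : ℕ) : ℝ) := by
          rw [hc]
      _ ≤ (∑ h : Fin T → Fin k × Fin 3,
            (∏ t, v (emb hkn (h t).1) / V * rho V (h t).2) * ((Msup (fun y => y ≠ 0) h : ℕ) : ℝ))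
          + ∑ h : Fin T → Fin k × Fin 3,
            (∏ t, v (emb hkn (h t).1) / V * rho V (h t).2) * ((Msup (fun y => y ≠ 0) h : ℕ) : ℝ) := by
          refine add_le_add_right (Finset.sum_le_sum fun h _ => ?_) _
          refine mul_le_mul_of_nonneg_left ?_ (hwnn h)
          exact_mod_cast Msup_lo_le h
      _ = 2 * ∑ h : Fin T → Fin k × Fin 3,
            (∏ t, v (emb hkn (h t).1) / V * rho V (h t).2) * ((Msup (fun y => y ≠ 0) h : ℕ) : ℝ) := by
          ring
  linarith
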